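/- Let A, B ∈ M_k(ℝ) with B invertible, and let C₁, C₂ ∈ ℝᵏ. Consider the linear ODE u′(x) = B⁻¹A u(x) + B⁻¹C₂ + c on [0,1] with fixed initial condition u(0) = u₀ (c a fixed vector). The map C₂ ↦ u(1) ∈ ℝᵏ is affine, and it is bijective if and only if σ(B⁻¹A) ∩ 2πi(ℤ∖{0}) = ∅. -/

import Mathlib

open Matrix Complex Real NormedSpace

attribute [local instance] Matrix.linftyOpNormedAddCommGroup Matrix.linftyOpNormedSpace
  Matrix.linftyOpNormedRing Matrix.linftyOpNormedAlgebra

variable {k : ℕ} {𝕜 : Type*} [RCLike 𝕜]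

noncomputable def mvCLM (v : Fin k → 𝕜) :
    Matrix (Fin k) (Fin k) 𝕜 →L[𝕜] (Fin k → 𝕜) :=
  LinearMap.toContinuousLinearMap
    { toFun := fun N => N.mulVec v
      map_add' := fun _ _ => Matrix.add_mulVec _ _ _
      map_smul' := fun r N => Matrix.smul_mulVec r N v }

@[simp] lemma mvCLM_apply (v : Fin k → 𝕜) (N : Matrix (Fin k) (Fin k) 𝕜) :
    mvCLM v N = N.mulVec v := rfl

lemma expE_continuous (M : Matrix (Fin k) (Fin k) 𝕜) :
    Continuous fun s : ℝ => NormedSpace.exp (-(s • M)) :=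
  exp_continuous.comp ((continuous_id.smul continuous_const).neg :
    Continuous fun s : ℝ => -(s • M))

lemma exp_mulVec_eigen (X : Matrix (Fin k) (Fin k) 𝕜) (v : Fin k → 𝕜) (μ : 𝕜)
    (h : X.mulVec v = μ • v) : (NormedSpace.exp X).mulVec v = NormedSpace.exp μ • v := by
  have hpow : ∀ n : ℕ, (X ^ n).mulVec v = μ ^ n • v := by
    intro n; induction n with
    | zero => simp
    | succ n ih =>
        rw [pow_succ, pow_succ, ← Matrix.mulVec_mulVec, h, Matrix.mulVec_smul, ih,
          smul_smul, mul_comm μ]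
  have h1 : (mvCLM v) (NormedSpace.exp X) = ∑' n : ℕ, (Nat.factorial n : 𝕜)⁻¹ • μ ^ n • v := by
    rw [congrFun (exp_eq_tsum 𝕜) X]
    refine ((mvCLM v).map_tsum (expSeries_summable' (𝕂 := 𝕜) X)).trans (tsum_congr fun n => ?_)
    change ((n.factorial : 𝕜)⁻¹ • X ^ n).mulVec v = _
    rw [Matrix.smul_mulVec, hpow]
  have h2 : ((ContinuousLinearMap.id 𝕜 𝕜).smulRight v) (NormedSpace.exp μ)
      = ∑' n : ℕ, (Nat.factorial n : 𝕜)⁻¹ • μ ^ n • v := by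
    rw [congrFun (exp_eq_tsum 𝕜) μ, ContinuousLinearMap.map_tsum _ (expSeries_summable' (𝕂 := 𝕜) μ)]
    refine tsum_congr fun n => ?_
    simp [smul_smul]
  simpa using h1.trans h2.symm

/-- Spectrum membership for matrices over `ℂ` via eigenvectors. -/
lemma matrix_mem_spectrum_iff (X : Matrix (Fin k) (Fin k) ℂ) (μ : ℂ) :
    μ ∈ spectrum ℂ X ↔ ∃ v, v ≠ 0 ∧ X.mulVec v = μ • v := by
  rw [spectrum.mem_iff]
  have hY : ∀ v : Fin k → ℂ,
      (algebraMap ℂ (Matrix (Fin k) (Fin k) ℂ) μ - X).mulVec v = μ • v - X.mulVec v := by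
    intro v
    rw [Matrix.sub_mulVec, Algebra.algebraMap_eq_smul_one, Matrix.smul_mulVec,
      Matrix.one_mulVec]
  constructor
  · intro h
    by_contra hv
    push_neg at hv
    apply h
    rw [← Matrix.mulVec_injective_iff_isUnit]
    have h0 : ∀ v, (algebraMap ℂ (Matrix (Fin k) (Fin k) ℂ) μ - X).mulVec v = 0 → v = 0 := by
      intro v hv0
      by_contra hne
      refine hv v hne ?_
      rw [hY] at hv0
      rw [← sub_eq_zero]
      rw [sub_eq_zero] at hv0 ⊢
      exact hv0.symm
    intro a b hab
    have : (algebraMap ℂ (Matrix (Fin k) (Fin k) ℂ) μ - X).mulVec (a - b) = 0 := by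
      rw [Matrix.mulVec_sub, hab, sub_self]
    simpa [sub_eq_zero] using h0 _ this
  · rintro ⟨v, hv, hXv⟩ hunit
    have hinj := Matrix.mulVec_injective_iff_isUnit.mpr hunit
    apply hv
    have : (algebraMap ℂ (Matrix (Fin k) (Fin k) ℂ) μ - X).mulVec v
        = (algebraMap ℂ (Matrix (Fin k) (Fin k) ℂ) μ - X).mulVec 0 := by
      rw [hY, hXv, sub_self, Matrix.mulVec_zero]
    exact hinj this

lemma integral_cexp_eq (μ : ℂ) (hμ : μ ≠ 0) :
    ∫ s in (0:ℝ)..1, Complex.exp (-(s • μ)) = μ⁻¹ * (1 - Complex.exp (-μ)) := by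
  have hderiv : ∀ s ∈ Set.uIcc (0:ℝ) 1,
      HasDerivAt (fun t : ℝ => -μ⁻¹ * Complex.exp (-(t • μ)))
        ((fun t : ℝ => Complex.exp (-(t • μ))) s) s := by
    intro s _
    have h1 : HasDerivAt (fun t : ℝ => -(t • μ)) (-μ) s := by
      simpa [Pi.neg_def] using ((hasDerivAt_id s).smul_const μ).neg
    have h2 := h1.cexp
    have h3 := h2.const_mul (-μ⁻¹)
    exact h3.congr_deriv (by field_simp)
  have hInt : IntervalIntegrable (fun t : ℝ => Complex.exp (-(t • μ)))
      MeasureTheory.volume 0 1 := by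
    apply Continuous.intervalIntegrable
    exact Complex.continuous_exp.comp ((continuous_id.smul continuous_const).neg)
  rw [intervalIntegral.integral_eq_sub_of_hasDerivAt hderiv hInt]
  simp only [one_smul, zero_smul, neg_zero, Complex.exp_zero]
  ring

lemma F_eq_zero_iff (μ : ℂ) :
    Complex.exp μ * ∫ s in (0:ℝ)..1, Complex.exp (-(s • μ)) = 0 ↔
      ∃ m : ℤ, m ≠ 0 ∧ μ = 2 * Real.pi * Complex.I * m := by
  rcases eq_or_ne μ 0 with rfl | hμ
  · simp only [Complex.exp_zero, one_mul]
    have : ∀ s : ℝ, Complex.exp (-(s • (0:ℂ))) = 1 := by intro s; simp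
    rw [intervalIntegral.integral_congr (g := fun _ => (1:ℂ)) (fun s _ => this s)]
    simp only [intervalIntegral.integral_const, sub_zero, one_smul]
    constructor
    · intro h; exact absurd h one_ne_zero
    · rintro ⟨m, hm, h⟩
      exfalso
      apply hm
      have h2 : (2 * (Real.pi : ℂ) * Complex.I) ≠ 0 := by
        simp [Complex.ofReal_eq_zero, Real.pi_ne_zero, Complex.I_ne_zero]
      have h' : (2 * (Real.pi : ℂ) * Complex.I) * m = 0 := by rw [← h]
      rcases mul_eq_zero.mp h' with h'' | h''
      · exact absurd h'' h2
      · exact_mod_cast h''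
  · rw [integral_cexp_eq μ hμ]
    have hexpne : Complex.exp (-μ) ≠ 0 := Complex.exp_ne_zero _
    constructor
    · intro h
      have h2 : Complex.exp μ = 1 := by
        have hprod : Complex.exp μ * (μ⁻¹ * (1 - Complex.exp (-μ))) = 0 := h
        have h3 : (1 : ℂ) - Complex.exp (-μ) = 0 := by
          rcases mul_eq_zero.mp hprod with h4 | h4
          · exact absurd h4 (Complex.exp_ne_zero μ)
          · rcases mul_eq_zero.mp h4 with h5 | h5
            · exact absurd h5 (inv_ne_zero hμ)
            · exact h5
        have h4 : Complex.exp (-μ) = 1 := by linear_combination -h3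
        calc Complex.exp μ = Complex.exp μ * Complex.exp (-μ) := by rw [h4, mul_one]
          _ = 1 := by rw [← Complex.exp_add]; simp
      obtain ⟨n, hn⟩ := Complex.exp_eq_one_iff.mp h2
      refine ⟨n, ?_, by rw [hn]; ring⟩
      rintro rfl
      simp at hn
      exact hμ hn
    · rintro ⟨m, hm, rfl⟩
      have h2 : Complex.exp (-(2 * Real.pi * Complex.I * m)) = 1 := by
        rw [Complex.exp_eq_one_iff]
        exact ⟨-m, by push_cast; ring⟩
      rw [h2]
      simp

lemma K_mulVec_eigen (X : Matrix (Fin k) (Fin k) ℂ) (v : Fin k → ℂ) (μ : ℂ)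
    (h : X.mulVec v = μ • v) :
    (NormedSpace.exp X * ∫ s in (0:ℝ)..1, NormedSpace.exp (-(s • X))).mulVec v
      = (Complex.exp μ * ∫ s in (0:ℝ)..1, Complex.exp (-(s • μ))) • v := by
  have h1 : ∀ s : ℝ, (NormedSpace.exp (-(s • X))).mulVec v = Complex.exp (-(s • μ)) • v := by
    intro s
    rw [Complex.exp_eq_exp_ℂ]
    apply exp_mulVec_eigen
    rw [Matrix.neg_mulVec, Matrix.smul_mulVec, h, neg_smul, smul_assoc]
  have h2 : (∫ s in (0:ℝ)..1, NormedSpace.exp (-(s • X))).mulVec v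
      = (∫ s in (0:ℝ)..1, Complex.exp (-(s • μ))) • v := by
    have hcomm := (mvCLM v).intervalIntegral_comp_comm (μ := MeasureTheory.volume)
      ((expE_continuous X).intervalIntegrable 0 1)
    change ∫ x in (0:ℝ)..1, (NormedSpace.exp (-(x • X))).mulVec v = (∫ x in (0:ℝ)..1, NormedSpace.exp (-(x • X))).mulVec v at hcomm
    rw [← hcomm]
    rw [intervalIntegral.integral_congr (g := fun s => Complex.exp (-(s • μ)) • v)
      (fun s _ => h1 s)]
    rw [intervalIntegral.integral_smul_const]
  rw [← Matrix.mulVec_mulVec, h2, Matrix.mulVec_smul]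
  rw [Complex.exp_eq_exp_ℂ] at *
  rw [exp_mulVec_eigen X v μ h, smul_smul, mul_comm]

noncomputable def mapCLM (k : ℕ) : Matrix (Fin k) (Fin k) ℝ →L[ℝ] Matrix (Fin k) (Fin k) ℂ :=
  LinearMap.toContinuousLinearMap
    { toFun := fun X => X.map (algebraMap ℝ ℂ)
      map_add' := fun X Y => by ext i j; simp
      map_smul' := fun r X => by ext i j; simp }

@[simp] lemma mapCLM_apply (X : Matrix (Fin k) (Fin k) ℝ) :
    mapCLM k X = X.map (algebraMap ℝ ℂ) := rfl

lemma map_exp_real (X : Matrix (Fin k) (Fin k) ℝ) :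
    (NormedSpace.exp X).map (algebraMap ℝ ℂ) = NormedSpace.exp (X.map (algebraMap ℝ ℂ)) := by
  have hcont : Continuous ⇑(RingHom.mapMatrix (algebraMap ℝ ℂ) :
      Matrix (Fin k) (Fin k) ℝ →+* Matrix (Fin k) (Fin k) ℂ) := (mapCLM k).continuous
  have h := map_exp (RingHom.mapMatrix (algebraMap ℝ ℂ) :
      Matrix (Fin k) (Fin k) ℝ →+* Matrix (Fin k) (Fin k) ℂ) hcont X
  rw [RingHom.mapMatrix_apply] at h
  exact h

lemma map_K_eq (M : Matrix (Fin k) (Fin k) ℝ) :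
    (NormedSpace.exp M * ∫ s in (0:ℝ)..1, NormedSpace.exp (-(s • M))).map (algebraMap ℝ ℂ)
      = NormedSpace.exp (M.map (algebraMap ℝ ℂ)) *
        ∫ s in (0:ℝ)..1, NormedSpace.exp (-(s • M.map (algebraMap ℝ ℂ))) := by
  rw [Matrix.map_mul (f := algebraMap ℝ ℂ), map_exp_real]
  congr 1
  have h := (mapCLM k).intervalIntegral_comp_comm (μ := MeasureTheory.volume)
    ((expE_continuous M).intervalIntegrable 0 1)
  change ∫ x in (0:ℝ)..1, (NormedSpace.exp (-(x • M))).map (algebraMap ℝ ℂ) = (∫ x in (0:ℝ)..1, NormedSpace.exp (-(x • M))).map (algebraMap ℝ ℂ) at h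
  rw [← h]
  refine intervalIntegral.integral_congr fun s _ => ?_
  rw [map_exp_real]
  congr 1
  ext i j
  simp

set_option maxHeartbeats 1000000 in
lemma isUnit_Kc_iff (X : Matrix (Fin k) (Fin k) ℂ) :
    IsUnit (NormedSpace.exp X * ∫ s in (0:ℝ)..1, NormedSpace.exp (-(s • X))) ↔
      ∀ m : ℤ, m ≠ 0 → (2 * Real.pi * Complex.I * (m : ℂ)) ∉ spectrum ℂ X := by
  set Kc := NormedSpace.exp X * ∫ s in (0:ℝ)..1, NormedSpace.exp (-(s • X)) with hKc
  constructor
  · intro hK m hm hmem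
    obtain ⟨v, hv, hXv⟩ := (matrix_mem_spectrum_iff X _).mp hmem
    have heig := K_mulVec_eigen X v _ hXv
    have hF : Complex.exp (2 * Real.pi * Complex.I * m) *
        ∫ s in (0:ℝ)..1, Complex.exp (-(s • (2 * Real.pi * Complex.I * (m:ℂ)))) = 0 :=
      (F_eq_zero_iff _).mpr ⟨m, hm, rfl⟩
    rw [hF, zero_smul] at heig
    have hinj := Matrix.mulVec_injective_iff_isUnit.mpr hK
    exact hv (hinj (heig.trans (Matrix.mulVec_zero Kc).symm))
  · intro hcond
    by_contra hK
    obtain ⟨v, hv, hKv⟩ := (matrix_mem_spectrum_iff Kc 0).mp ((spectrum.zero_mem_iff ℂ).mpr hK)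
    rw [zero_smul] at hKv
    -- the kernel of Kc is a nontrivial invariant subspace for X
    set W : Submodule ℂ (Fin k → ℂ) := LinearMap.ker Kc.mulVecLin with hW
    have hvW : v ∈ W := by
      rw [hW, LinearMap.mem_ker, Matrix.mulVecLin_apply, hKv]
    have hXKc : X * Kc = Kc * X := by
      have hxe : Commute X (NormedSpace.exp X) := (Commute.refl X).exp_right
      have hxE : ∀ s : ℝ, Commute X (NormedSpace.exp (-(s • X))) :=
        fun s => (((Commute.refl X).smul_right s).neg_right).exp_right
      have hlf := (ContinuousLinearMap.mul ℂ (Matrix (Fin k) (Fin k) ℂ)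
        X).intervalIntegral_comp_comm (μ := MeasureTheory.volume)
        ((expE_continuous X).intervalIntegrable 0 1)
      have hrf := ((ContinuousLinearMap.mul ℂ (Matrix (Fin k) (Fin k) ℂ)).flip
        X).intervalIntegral_comp_comm (μ := MeasureTheory.volume)
        ((expE_continuous X).intervalIntegrable 0 1)
      simp only [ContinuousLinearMap.mul_apply', ContinuousLinearMap.flip_apply] at hlf hrf
      have hXJ : X * (∫ s in (0:ℝ)..1, NormedSpace.exp (-(s • X)))
          = (∫ s in (0:ℝ)..1, NormedSpace.exp (-(s • X))) * X := by
        rw [← hlf, ← hrf]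
        exact intervalIntegral.integral_congr fun s _ => (hxE s).eq
      rw [hKc, ← mul_assoc, hxe.eq, mul_assoc, hXJ, ← mul_assoc]
    have hWinv : ∀ x ∈ W, X.mulVecLin x ∈ W := by
      intro x hx
      rw [hW, LinearMap.mem_ker] at hx ⊢
      simp only [Matrix.mulVecLin_apply] at hx ⊢
      rw [Matrix.mulVec_mulVec, ← hXKc, ← Matrix.mulVec_mulVec, hx, Matrix.mulVec_zero]
    haveI : Nontrivial W := Submodule.nontrivial_iff_ne_bot.mpr
      (Submodule.ne_bot_iff _ |>.mpr ⟨v, hvW, hv⟩)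
    obtain ⟨μ, hμ⟩ := Module.End.exists_eigenvalue (X.mulVecLin.restrict hWinv)
    obtain ⟨w, hw⟩ := hμ.exists_hasEigenvector
    have hXw : X.mulVec (w : Fin k → ℂ) = μ • (w : Fin k → ℂ) := by
      have h1 : (X.mulVecLin.restrict hWinv) w = μ • w := hw.apply_eq_smul
      have h2 := congrArg (Subtype.val) h1
      rw [LinearMap.restrict_apply] at h2
      simpa [Matrix.mulVecLin_apply] using h2
    have hwne : (w : Fin k → ℂ) ≠ 0 := fun h0 => hw.right (ZeroMemClass.coe_eq_zero.mp h0)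
    have hKw : Kc.mulVec (w : Fin k → ℂ) = 0 := by
      have hmem : (w : Fin k → ℂ) ∈ LinearMap.ker Kc.mulVecLin := w.2
      rw [LinearMap.mem_ker, Matrix.mulVecLin_apply] at hmem
      exact hmem
    have heig := K_mulVec_eigen X (w : Fin k → ℂ) μ hXw
    rw [hKw] at heig
    have hF0 : Complex.exp μ * ∫ s in (0:ℝ)..1, Complex.exp (-(s • μ)) = 0 := by
      rcases smul_eq_zero.mp heig.symm with h | h
      · exact h
      · exact absurd h hwne
    obtain ⟨m, hm, rfl⟩ := (F_eq_zero_iff μ).mp hF0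
    exact hcond m hm ((matrix_mem_spectrum_iff X _).mpr ⟨w, hwne, hXw⟩)

noncomputable def matΦ : Matrix (Fin k) (Fin k) 𝕜 →L[𝕜]
    ((Fin k → 𝕜) →L[𝕜] (Fin k → 𝕜)) :=
  LinearMap.toContinuousLinearMap
    ((LinearMap.toContinuousLinearMap.toLinearMap).comp
      (Matrix.toLin' : Matrix (Fin k) (Fin k) 𝕜 ≃ₗ[𝕜] _).toLinearMap)

@[simp] lemma matΦ_apply (N : Matrix (Fin k) (Fin k) 𝕜) (u : Fin k → 𝕜) :
    matΦ (𝕜 := 𝕜) N u = N.mulVec u := by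
  simp [matΦ, Matrix.toLin'_apply]

lemma sol_one_eq (M : Matrix (Fin k) (Fin k) ℝ) (w u₀ : Fin k → ℝ)
    (u : ℝ → (Fin k → ℝ)) (h0 : u 0 = u₀)
    (hu : ∀ x ∈ Set.Icc (0:ℝ) 1, HasDerivAt u (M.mulVec (u x) + w) x) :
    u 1 = (NormedSpace.exp M).mulVec u₀ +
      (NormedSpace.exp M * ∫ s in (0:ℝ)..1, NormedSpace.exp (-(s • M))).mulVec w := by
  have hEcont : Continuous fun s : ℝ => NormedSpace.exp (-(s • M)) := expE_continuous M
  have hwcont : Continuous fun s : ℝ => (NormedSpace.exp (-(s • M))).mulVec w := by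
    exact (mvCLM w).continuous.comp hEcont
  set Φ : Matrix (Fin k) (Fin k) ℝ →L[ℝ] ((Fin k → ℝ) →L[ℝ] (Fin k → ℝ)) := matΦ with hΦdef
  set g : ℝ → (Fin k → ℝ) := fun y =>
    Φ (NormedSpace.exp (-(y • M))) (u y) - ∫ s in (0:ℝ)..y, (NormedSpace.exp (-(s • M))).mulVec w with hg
  have key : ∀ x ∈ Set.uIcc (0:ℝ) 1, HasDerivAt g ((fun _ => (0 : Fin k → ℝ)) x) x := by
    intro x hx
    rw [Set.uIcc_of_le (by norm_num : (0:ℝ) ≤ 1)] at hx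
    have hexp : HasDerivAt (fun y : ℝ => NormedSpace.exp (-(y • M)))
        (-(NormedSpace.exp (-(x • M)) * M)) x := by
      have h' := (hasDerivAt_exp_smul_const (𝕂 := ℝ) M (-x)).scomp x (hasDerivAt_neg x)
      simp [Function.comp_def, neg_smul] at h'
      exact h'
    have hΦ : HasDerivAt (fun y : ℝ => Φ (NormedSpace.exp (-(y • M))))
        (Φ (-(NormedSpace.exp (-(x • M)) * M))) x :=
      Φ.hasFDerivAt.comp_hasDerivAt x hexp
    have hmul := hΦ.clm_apply (hu x hx)
    have hint : HasDerivAt (fun y : ℝ => ∫ s in (0:ℝ)..y, (NormedSpace.exp (-(s • M))).mulVec w)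
        ((NormedSpace.exp (-(x • M))).mulVec w) x :=
      intervalIntegral.integral_hasDerivAt_right (hwcont.intervalIntegrable 0 x)
        (hwcont.stronglyMeasurableAtFilter _ _) hwcont.continuousAt
    have := hmul.sub hint
    refine this.congr_deriv ?_
    simp [hΦdef, Matrix.mulVec_add, Matrix.neg_mulVec, ← Matrix.mulVec_mulVec]
  have hg10 : g 1 = g 0 := by
    have h2 := intervalIntegral.integral_eq_sub_of_hasDerivAt key
      (continuous_const.intervalIntegrable 0 1)
    simp only [intervalIntegral.integral_zero] at h2
    exact sub_eq_zero.mp h2.symm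
  have hg0 : g 0 = u₀ := by simp [hg, hΦdef, h0]
  rw [hg0] at hg10
  have hXunit : NormedSpace.exp M * NormedSpace.exp (-((1:ℝ) • M)) = 1 := by
    rw [one_smul, ← Matrix.exp_add_of_commute M (-M) ((Commute.refl M).neg_right)]
    simp
  have hu1 : (NormedSpace.exp (-((1:ℝ) • M))).mulVec (u 1)
      = u₀ + ∫ s in (0:ℝ)..1, (NormedSpace.exp (-(s • M))).mulVec w := by
    have : g 1 = u₀ := hg10
    rw [hg] at this
    simpa [hΦdef, sub_eq_iff_eq_add] using this
  have hpull : (∫ s in (0:ℝ)..1, (NormedSpace.exp (-(s • M))).mulVec w)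
      = (∫ s in (0:ℝ)..1, NormedSpace.exp (-(s • M))).mulVec w := by
    have := (mvCLM w).intervalIntegral_comp_comm (μ := MeasureTheory.volume) (hEcont.intervalIntegrable 0 1)
    exact this
  calc u 1 = (NormedSpace.exp M * NormedSpace.exp (-((1:ℝ) • M))).mulVec (u 1) := by rw [hXunit, Matrix.one_mulVec]
    _ = (NormedSpace.exp M).mulVec ((NormedSpace.exp (-((1:ℝ) • M))).mulVec (u 1)) := by
        rw [← Matrix.mulVec_mulVec]
    _ = (NormedSpace.exp M).mulVec u₀ + (NormedSpace.exp M).mulVec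
          ((∫ s in (0:ℝ)..1, NormedSpace.exp (-(s • M))).mulVec w) := by
        rw [hu1, hpull, Matrix.mulVec_add]
    _ = _ := by rw [Matrix.mulVec_mulVec]


lemma mulVec_bijective_iff_isUnit (Y : Matrix (Fin k) (Fin k) ℝ) :
    Function.Bijective Y.mulVec ↔ IsUnit Y := by
  constructor
  · exact fun h => Matrix.mulVec_injective_iff_isUnit.mp h.1
  · intro h
    have hinj := Matrix.mulVec_injective_iff_isUnit.mpr h
    refine ⟨hinj, ?_⟩
    have hinj' : Function.Injective Y.mulVecLin := by
      exact hinj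
    have hsurj := (LinearMap.injective_iff_surjective (f := Y.mulVecLin)).mp hinj'
    intro y
    obtain ⟨x, hx⟩ := hsurj y
    exact ⟨x, by simpa [Matrix.mulVecLin_apply] using hx⟩

lemma isUnit_map_complex_iff (Y : Matrix (Fin k) (Fin k) ℝ) :
    IsUnit Y ↔ IsUnit (Y.map (algebraMap ℝ ℂ)) := by
  rw [Matrix.isUnit_iff_isUnit_det, Matrix.isUnit_iff_isUnit_det, isUnit_iff_ne_zero,
    isUnit_iff_ne_zero]
  have h : (Y.map (algebraMap ℝ ℂ)).det = algebraMap ℝ ℂ Y.det :=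
    ((algebraMap ℝ ℂ).map_det Y).symm
  rw [h]
  simp [Complex.ofReal_ne_zero]

/-- For the linear ODE `u′ = B⁻¹A u + B⁻¹C₂ + c` on `[0,1]` with `u(0) = u₀`, the map
`C₂ ↦ u(1)` is affine, and it is bijective iff `σ(B⁻¹A) ∩ 2πi(ℤ∖{0}) = ∅`. -/
theorem stmt6 {k : ℕ} (A B : Matrix (Fin k) (Fin k) ℝ) (hB : IsUnit B)
    (c u₀ : Fin k → ℝ)
    (sol : (Fin k → ℝ) → ℝ → (Fin k → ℝ))
    (hsol0 : ∀ C₂, sol C₂ 0 = u₀)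
    (hsol : ∀ C₂, ∀ x ∈ Set.Icc (0:ℝ) 1,
      HasDerivAt (sol C₂)
        ((B⁻¹ * A).mulVec (sol C₂ x) + B⁻¹.mulVec C₂ + c) x) :
    (∃ (L : (Fin k → ℝ) →ₗ[ℝ] (Fin k → ℝ)) (b : Fin k → ℝ),
      ∀ C₂, sol C₂ 1 = L C₂ + b) ∧
    (Function.Bijective (fun C₂ => sol C₂ 1) ↔
      ∀ m : ℤ, m ≠ 0 →
        (2 * Real.pi * Complex.I * (m : ℂ)) ∉
          spectrum ℂ ((B⁻¹ * A).map (algebraMap ℝ ℂ))) := by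
  set M := B⁻¹ * A with hMdef
  set K := NormedSpace.exp M * ∫ s in (0:ℝ)..1, NormedSpace.exp (-(s • M)) with hKdef
  have hformula : ∀ C₂, sol C₂ 1 = (K * B⁻¹).mulVec C₂ +
      ((NormedSpace.exp M).mulVec u₀ + K.mulVec c) := by
    intro C₂
    have hode : ∀ x ∈ Set.Icc (0:ℝ) 1, HasDerivAt (sol C₂)
        (M.mulVec (sol C₂ x) + (B⁻¹.mulVec C₂ + c)) x := by
      intro x hx
      have h := hsol C₂ x hx
      rwa [add_assoc] at h
    have h := sol_one_eq M (B⁻¹.mulVec C₂ + c) u₀ (sol C₂) (hsol0 C₂) hode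
    rw [← hKdef] at h
    have hsplit : (K * B⁻¹) *ᵥ C₂ = K *ᵥ (B⁻¹ *ᵥ C₂) := by
      rw [Matrix.mulVec_mulVec]
    rw [h, hsplit, Matrix.mulVec_add]
    abel
  constructor
  · refine ⟨(K * B⁻¹).mulVecLin, (NormedSpace.exp M).mulVec u₀ + K.mulVec c, fun C₂ => ?_⟩
    rw [hformula C₂]
    simp [Matrix.mulVecLin_apply]
  · have hfun : (fun C₂ => sol C₂ 1) =
        (⇑(Equiv.addRight ((NormedSpace.exp M).mulVec u₀ + K.mulVec c))) ∘ (K * B⁻¹).mulVec := by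
      funext C₂
      rw [hformula C₂]
      rfl
    rw [hfun, Equiv.comp_bijective, mulVec_bijective_iff_isUnit]
    have hBdet : IsUnit B⁻¹.det := Matrix.isUnit_nonsing_inv_det B ((Matrix.isUnit_iff_isUnit_det B).mp hB)
    have hKiff : IsUnit (K * B⁻¹) ↔ IsUnit K := by
      rw [Matrix.isUnit_iff_isUnit_det, Matrix.det_mul, IsUnit.mul_iff,
        ← Matrix.isUnit_iff_isUnit_det]
      exact ⟨fun h => h.1, fun h => ⟨h, hBdet⟩⟩
    rw [hKiff, isUnit_map_complex_iff, hKdef, map_K_eq, isUnit_Kc_iff]
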